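/- For a compact metric space (X, ρ), the barycenter map ψ : (I²(X), ρ_2) → (I(X), ρ_1) is nonexpanding: ρ_1(ψ(M), ψ(N)) ≤ ρ_2(M, N) for all M, N ∈ I²(X). -/

import Mathlib

/-- An idempotent probability measure on `X`: a functional on `C(X, ℝ)` preserving constants,
shifting under addition of constants, and turning pointwise max into max. -/
def IsIPM (X : Type*) [TopologicalSpace X] (μ : C(X, ℝ) → ℝ) : Prop :=
  (∀ c : ℝ, μ (ContinuousMap.const X c) = c) ∧
  (∀ (φ : C(X, ℝ)) (c : ℝ), μ (φ + ContinuousMap.const X c) = μ φ + c) ∧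
  (∀ φ ψ : C(X, ℝ), μ (φ ⊔ ψ) = max (μ φ) (μ ψ))


/-- Pushforward of a functional along a continuous map: `I(f)(μ)(φ) = μ(φ ∘ f)`. -/
def IPMmap {X Y : Type*} [TopologicalSpace X] [TopologicalSpace Y]
    (f : C(X, Y)) (μ : C(X, ℝ) → ℝ) : C(Y, ℝ) → ℝ :=
  fun φ => μ (φ.comp f)


/-- The support of `μ`: intersection of all closed `A ⊆ X` such that `μ` comes from an
idempotent probability measure on `A`. -/
def IPMsupp {X : Type*} [TopologicalSpace X] (μ : C(X, ℝ) → ℝ) : Set X :=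
  ⋂₀ {A : Set X | IsClosed A ∧ ∃ ν : C(A, ℝ) → ℝ, IsIPM A ν ∧
      ∀ φ : C(X, ℝ), μ φ = ν (φ.restrict A)}

/-- The set `Λ(μ₁, μ₂)` of admissible measures on `X × X` with marginals `μ₁`, `μ₂`. -/
def AdmSet {X : Type*} [TopologicalSpace X] (μ₁ μ₂ : C(X, ℝ) → ℝ) :
    Set (C(X × X, ℝ) → ℝ) :=
  {ξ | IsIPM (X × X) ξ ∧ IPMmap ContinuousMap.fst ξ = μ₁ ∧ IPMmap ContinuousMap.snd ξ = μ₂}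

/-- `ρ_I(μ₁, μ₂) = inf { sup { d(x,y) : (x,y) ∈ supp ξ } : ξ ∈ Λ(μ₁, μ₂) }`,
with respect to a distance function `d` on `X`. -/
noncomputable def rhoID {X : Type*} [TopologicalSpace X] (d : X → X → ℝ)
    (μ₁ μ₂ : C(X, ℝ) → ℝ) : ℝ :=
  sInf ((fun ξ => sSup ((fun p : X × X => d p.1 p.2) '' IPMsupp ξ)) '' AdmSet μ₁ μ₂)

/-- The space `I(X)` of idempotent probability measures, with the pointwise-convergence
(subspace of product) topology. -/
abbrev IPMspace (X : Type*) [TopologicalSpace X] := {μ : C(X, ℝ) → ℝ // IsIPM X μ}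

/-- For `φ ∈ C(X, ℝ)`, the function `φ̄ : I(X) → ℝ`, `φ̄(μ) = μ(φ)`, is continuous. -/
def barFn {X : Type*} [TopologicalSpace X] (φ : C(X, ℝ)) : C(IPMspace X, ℝ) :=
  ⟨fun μ => μ.1 φ, (continuous_apply φ).comp continuous_subtype_val⟩

/-- The barycenter map `ψ_X : I²(X) → I(X)`, `ψ_X(M)(φ) = M(φ̄)`. -/
def bary {X : Type*} [TopologicalSpace X] (M : C(IPMspace X, ℝ) → ℝ) : C(X, ℝ) → ℝ :=
  fun φ => M (barFn φ)


namespace IPMaux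


variable {Z : Type*} [TopologicalSpace Z] {μ : C(Z, ℝ) → ℝ}

lemma mono (h : IsIPM Z μ) {φ ψ : C(Z,ℝ)} (hle : φ ≤ ψ) : μ φ ≤ μ ψ := by
  have h1 : φ ⊔ ψ = ψ := sup_eq_right.mpr hle
  have h2 := h.2.2 φ ψ
  rw [h1] at h2
  rw [h2]
  exact le_max_left _ _

lemma mono_shift (h : IsIPM Z μ) {φ ψ : C(Z,ℝ)} {c : ℝ} (hle : ∀ z, φ z ≤ ψ z + c) :
    μ φ ≤ μ ψ + c := by
  have : φ ≤ ψ + ContinuousMap.const Z c := fun z => by simpa using hle z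
  calc μ φ ≤ μ (ψ + ContinuousMap.const Z c) := mono h this
    _ = μ ψ + c := h.2.1 ψ c

lemma zero_eq (h : IsIPM Z μ) : μ (0 : C(Z,ℝ)) = 0 := h.1 0

lemma norm_bound [CompactSpace Z] (h : IsIPM Z μ) (φ : C(Z,ℝ)) : |μ φ| ≤ ‖φ‖ := by
  have h0 : μ (0 : C(Z,ℝ)) = 0 := zero_eq h
  have h1 : μ φ ≤ μ (0 : C(Z,ℝ)) + ‖φ‖ := by
    refine mono_shift h fun z => ?_
    have := (_root_.abs_le.mp (φ.norm_coe_le_norm z)).2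
    simp only [ContinuousMap.zero_apply]
    linarith
  have h2 : μ (0 : C(Z,ℝ)) ≤ μ φ + ‖φ‖ := by
    refine mono_shift h fun z => ?_
    have := (_root_.abs_le.mp (φ.norm_coe_le_norm z)).1
    simp only [ContinuousMap.zero_apply]
    linarith
  rw [h0] at h1 h2
  rw [_root_.abs_le]
  constructor <;> linarith

lemma lipschitz (h : IsIPM Z μ) {φ ψ : C(Z,ℝ)} {c : ℝ} (hc : ∀ z, |φ z - ψ z| ≤ c) :
    |μ φ - μ ψ| ≤ c := by
  have h1 : μ φ ≤ μ ψ + c := mono_shift h fun z => by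
    have := (_root_.abs_le.mp (hc z)).2; linarith
  have h2 : μ ψ ≤ μ φ + c := mono_shift h fun z => by
    have := (_root_.abs_le.mp (hc z)).1; linarith
  rw [_root_.abs_le]; constructor <;> linarith

lemma nonempty (h : IsIPM Z μ) : Nonempty Z := by
  by_contra hne
  have heq : (ContinuousMap.const Z (0:ℝ)) = ContinuousMap.const Z (1:ℝ) := by
    ext z; exact absurd ⟨z⟩ hne
  have h2 := congrArg (fun f : C(Z,ℝ) => μ f) heq
  rw [h.1 0, h.1 1] at h2
  norm_num at h2


section P2


variable {Z : Type*} [TopologicalSpace Z] {μ : C(Z, ℝ) → ℝ}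

lemma ipm_continuous [CompactSpace Z] (h : IsIPM Z μ) : Continuous μ := by
  refine (LipschitzWith.of_dist_le_mul (K := 1) fun f g => ?_).continuous
  rw [Real.dist_eq]
  simp only [NNReal.coe_one, one_mul]
  have : ∀ z, |f z - g z| ≤ dist f g := fun z => by
    have := ContinuousMap.dist_apply_le_dist (f := f) (g := g) z
    rwa [Real.dist_eq] at this
  have h1 : μ f ≤ μ g + dist f g := mono_shift h fun z => by
    have := (_root_.abs_le.mp (this z)).2; linarith
  have h2 : μ g ≤ μ f + dist f g := mono_shift h fun z => by
    have := (_root_.abs_le.mp (this z)).1; linarith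
  rw [_root_.abs_le]; constructor <;> linarith

/-- The product (independent) coupling of two idempotent measures. -/
noncomputable def prodIPM {X Y : Type*} [TopologicalSpace X] [TopologicalSpace Y]
    [CompactSpace Y] (μ : C(X,ℝ) → ℝ) (ν : C(Y,ℝ) → ℝ) (hν : IsIPM Y ν) :
    C(X × Y, ℝ) → ℝ :=
  fun φ => μ ((⟨ν, ipm_continuous hν⟩ : C(C(Y,ℝ), ℝ)).comp φ.curry)

variable {X Y : Type*} [TopologicalSpace X] [TopologicalSpace Y] [CompactSpace Y]
  {μX : C(X,ℝ) → ℝ} {νY : C(Y,ℝ) → ℝ}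

lemma prodIPM_isIPM (hμ : IsIPM X μX) (hν : IsIPM Y νY) :
    IsIPM (X × Y) (prodIPM μX νY hν) := by
  refine ⟨fun c => ?_, fun φ c => ?_, fun φ ψ => ?_⟩
  · have : (⟨νY, ipm_continuous hν⟩ : C(C(Y,ℝ), ℝ)).comp
        (ContinuousMap.const (X × Y) c).curry = ContinuousMap.const X c := by
      ext x
      simp only [ContinuousMap.comp_apply, ContinuousMap.const_apply]
      have : (ContinuousMap.const (X × Y) c).curry x = ContinuousMap.const Y c := by
        ext y; rfl
      rw [this]
      exact hν.1 c
    rw [prodIPM, this, hμ.1]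
  · have : (⟨νY, ipm_continuous hν⟩ : C(C(Y,ℝ), ℝ)).comp
        (φ + ContinuousMap.const (X × Y) c).curry =
        (⟨νY, ipm_continuous hν⟩ : C(C(Y,ℝ), ℝ)).comp φ.curry
          + ContinuousMap.const X c := by
      ext x
      simp only [ContinuousMap.comp_apply, ContinuousMap.add_apply,
        ContinuousMap.const_apply]
      have : (φ + ContinuousMap.const (X × Y) c).curry x =
          φ.curry x + ContinuousMap.const Y c := by ext y; rfl
      rw [this]
      exact hν.2.1 _ c
    rw [prodIPM, this]
    exact hμ.2.1 _ c
  · have : (⟨νY, ipm_continuous hν⟩ : C(C(Y,ℝ), ℝ)).comp (φ ⊔ ψ).curry =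
        ((⟨νY, ipm_continuous hν⟩ : C(C(Y,ℝ), ℝ)).comp φ.curry) ⊔
        ((⟨νY, ipm_continuous hν⟩ : C(C(Y,ℝ), ℝ)).comp ψ.curry) := by
      ext x
      simp only [ContinuousMap.comp_apply, ContinuousMap.sup_apply]
      have : (φ ⊔ ψ).curry x = φ.curry x ⊔ ψ.curry x := by
        ext y; simp [ContinuousMap.curry_apply]
      rw [this]
      exact hν.2.2 _ _
    rw [prodIPM, this]
    exact hμ.2.2 _ _

lemma prodIPM_fst (hμ : IsIPM X μX) (hν : IsIPM Y νY) :
    IPMmap ContinuousMap.fst (prodIPM μX νY hν) = μX := by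
  funext φ
  show prodIPM μX νY hν (φ.comp ContinuousMap.fst) = μX φ
  rw [prodIPM]
  congr 1
  ext x
  simp only [ContinuousMap.comp_apply]
  have : (φ.comp ContinuousMap.fst).curry x = ContinuousMap.const Y (φ x) := by
    ext y; rfl
  rw [this]
  exact hν.1 _

lemma prodIPM_snd (hμ : IsIPM X μX) (hν : IsIPM Y νY) :
    IPMmap ContinuousMap.snd (prodIPM μX νY hν) = νY := by
  funext φ
  show prodIPM μX νY hν (φ.comp ContinuousMap.snd) = νY φ
  rw [prodIPM]
  have : (⟨νY, ipm_continuous hν⟩ : C(C(Y,ℝ), ℝ)).comp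
      (φ.comp ContinuousMap.snd).curry = ContinuousMap.const X (νY φ) := by
    ext x
    simp only [ContinuousMap.comp_apply, ContinuousMap.const_apply]
    have h2 : (φ.comp ContinuousMap.snd).curry x = φ := by ext y; rfl
    rw [h2]
    rfl
  rw [this]
  exact hμ.1 _

lemma admSet_nonempty {W : Type*} [TopologicalSpace W] [CompactSpace W]
    {μ₁ μ₂ : C(W,ℝ) → ℝ} (h₁ : IsIPM W μ₁) (h₂ : IsIPM W μ₂) :
    (AdmSet μ₁ μ₂).Nonempty :=
  ⟨prodIPM μ₁ μ₂ h₂, prodIPM_isIPM h₁ h₂, prodIPM_fst h₁ h₂, prodIPM_snd h₁ h₂⟩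


end P2

section P3


variable {W : Type*} [TopologicalSpace W]

lemma isClosed_isIPM : IsClosed {μ : C(W,ℝ) → ℝ | IsIPM W μ} := by
  have hrw : {μ : C(W,ℝ) → ℝ | IsIPM W μ} =
      (⋂ c : ℝ, {μ : C(W,ℝ) → ℝ | μ (ContinuousMap.const W c) = c}) ∩
      ((⋂ φ : C(W,ℝ), ⋂ c : ℝ,
          {μ : C(W,ℝ) → ℝ | μ (φ + ContinuousMap.const W c) = μ φ + c}) ∩
       (⋂ φ : C(W,ℝ), ⋂ ψ : C(W,ℝ),
          {μ : C(W,ℝ) → ℝ | μ (φ ⊔ ψ) = max (μ φ) (μ ψ)})) := by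
    ext μ
    simp only [Set.mem_setOf_eq, Set.mem_inter_iff, Set.mem_iInter, IsIPM]
  rw [hrw]
  refine IsClosed.inter ?_ (IsClosed.inter ?_ ?_)
  · exact isClosed_iInter fun c => isClosed_eq (continuous_apply _) continuous_const
  · exact isClosed_iInter fun φ => isClosed_iInter fun c =>
      isClosed_eq (continuous_apply _) ((continuous_apply φ).add continuous_const)
  · exact isClosed_iInter fun φ => isClosed_iInter fun ψ =>
      isClosed_eq (continuous_apply _) ((continuous_apply φ).max (continuous_apply ψ))

lemma isCompact_isIPM [CompactSpace W] : IsCompact {μ : C(W,ℝ) → ℝ | IsIPM W μ} := by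
  refine IsCompact.of_isClosed_subset
    (isCompact_univ_pi fun φ : C(W,ℝ) => isCompact_Icc (a := -‖φ‖) (b := ‖φ‖))
    isClosed_isIPM ?_
  intro μ hμ
  rw [Set.mem_univ_pi]
  intro φ
  have := norm_bound hμ φ
  rw [_root_.abs_le] at this
  exact ⟨this.1, this.2⟩


end P3

section P4


variable {W : Type*} [TopologicalSpace W] {μ : C(W, ℝ) → ℝ}

/-- `μ` is representable on the closed set `A`. -/
def Rep (μ : C(W, ℝ) → ℝ) (A : Set W) : Prop :=
  IsClosed A ∧ ∃ ν : C(A, ℝ) → ℝ, IsIPM A ν ∧ ∀ φ : C(W, ℝ), μ φ = ν (φ.restrict A)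

lemma supp_eq : IPMsupp μ = ⋂₀ {A : Set W | Rep μ A} := rfl

lemma supp_subset_of_rep {A : Set W} (hA : Rep μ A) : IPMsupp μ ⊆ A :=
  Set.sInter_subset_of_mem (by exact hA)

lemma rep_mono {A B : Set W} (hA : Rep μ A) (hAB : A ⊆ B) (hB : IsClosed B) : Rep μ B := by
  obtain ⟨hAc, ν, hν, hrep⟩ := hA
  refine ⟨hB, fun ψ => ν (ψ.comp ⟨Set.inclusion hAB, continuous_inclusion hAB⟩), ⟨?_, ?_, ?_⟩, ?_⟩
  · intro c
    have : (ContinuousMap.const (↥B) c).comp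
        (⟨Set.inclusion hAB, continuous_inclusion hAB⟩ : C(↥A, ↥B)) =
        ContinuousMap.const (↥A) c := by ext a; rfl
    dsimp only
    rw [this]; exact hν.1 c
  · intro ψ c
    have : (ψ + ContinuousMap.const (↥B) c).comp
        (⟨Set.inclusion hAB, continuous_inclusion hAB⟩ : C(↥A, ↥B)) =
        ψ.comp ⟨Set.inclusion hAB, continuous_inclusion hAB⟩ +
          ContinuousMap.const (↥A) c := by ext a; rfl
    dsimp only
    rw [this]; exact hν.2.1 _ c
  · intro ψ ψ'
    have : (ψ ⊔ ψ').comp (⟨Set.inclusion hAB, continuous_inclusion hAB⟩ : C(↥A, ↥B)) =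
        ψ.comp ⟨Set.inclusion hAB, continuous_inclusion hAB⟩ ⊔
          ψ'.comp ⟨Set.inclusion hAB, continuous_inclusion hAB⟩ := by
      ext a; simp
    dsimp only
    rw [this]; exact hν.2.2 _ _
  · intro φ
    have : (φ.restrict B).comp (⟨Set.inclusion hAB, continuous_inclusion hAB⟩ : C(↥A, ↥B)) =
        φ.restrict A := by ext a; rfl
    dsimp only
    rw [this]; exact hrep φ

lemma rep_univ (h : IsIPM W μ) : Rep μ Set.univ := by
  have hincl : Continuous (fun w : W => (⟨w, Set.mem_univ w⟩ : ↥(Set.univ : Set W))) :=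
    Continuous.subtype_mk continuous_id _
  refine ⟨isClosed_univ, fun ψ => μ (ψ.comp ⟨_, hincl⟩), ⟨?_, ?_, ?_⟩, ?_⟩
  · intro c
    have : (ContinuousMap.const _ c).comp (⟨_, hincl⟩ :
        C(W, ↥(Set.univ : Set W))) = ContinuousMap.const W c := by ext w; rfl
    dsimp only
    rw [this]; exact h.1 c
  · intro ψ c
    have : (ψ + ContinuousMap.const _ c).comp (⟨_, hincl⟩ :
        C(W, ↥(Set.univ : Set W))) = ψ.comp ⟨_, hincl⟩ + ContinuousMap.const W c := by
      ext w; rfl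
    dsimp only
    rw [this]; exact h.2.1 _ c
  · intro ψ ψ'
    have : (ψ ⊔ ψ').comp (⟨_, hincl⟩ : C(W, ↥(Set.univ : Set W))) =
        ψ.comp ⟨_, hincl⟩ ⊔ ψ'.comp ⟨_, hincl⟩ := by ext w; simp
    dsimp only
    rw [this]; exact h.2.2 _ _
  · intro φ
    dsimp only
    have : (φ.restrict Set.univ).comp (⟨_, hincl⟩ : C(W, ↥(Set.univ : Set W))) = φ := by
      ext w; rfl
    rw [this]


lemma mono_inter [CompactSpace W] [NormalSpace W] (h : IsIPM W μ) {ι : Type*}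
    (A : ι → Set W) (s : Finset ι) (hA : ∀ i ∈ s, Rep μ (A i))
    (φ φ' : C(W,ℝ)) (hle : ∀ z ∈ ⋂ i ∈ s, A i, φ z ≤ φ' z) : μ φ ≤ μ φ' := by
  classical
  induction s using Finset.induction_on generalizing φ φ' with
  | empty => exact mono h fun z => hle z (by simp)
  | @insert a s ha ih =>
    have hAa : Rep μ (A a) := hA a (Finset.mem_insert_self a s)
    obtain ⟨hAc, ν, hν, hrep⟩ := hAa
    have hA' : ∀ i ∈ s, Rep μ (A i) := fun i hi => hA i (Finset.mem_insert_of_mem hi)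
    have hS : IsClosed (⋂ i ∈ s, A i) := isClosed_biInter fun i hi => (hA' i hi).1
    refine le_of_forall_pos_le_add fun ε hε => ?_
    set U : Set W := {z | φ z < φ' z + ε} with hUdef
    have hU : IsOpen U := isOpen_lt φ.continuous (φ'.continuous.add continuous_const)
    have hC : IsClosed (A a \ U) := hAc.sdiff hU
    have hd : Disjoint (⋂ i ∈ s, A i) (A a \ U) := by
      rw [Set.disjoint_left]
      intro z hzS hzC
      refine hzC.2 ?_
      have : z ∈ ⋂ i ∈ insert a s, A i := by
        refine Set.mem_iInter₂.mpr fun i hi => ?_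
        rcases Finset.mem_insert.mp hi with rfl | hi'
        · exact hzC.1
        · exact Set.mem_iInter₂.mp hzS i hi' 
      have h1 := hle z this
      show φ z < φ' z + ε
      linarith
    obtain ⟨g, hg0, hg1, hg01⟩ := exists_continuous_zero_one_of_isClosed hS hC hd
    set c : ℝ := ‖φ‖ + ‖φ'‖ with hcdef
    have hc0 : 0 ≤ c := by
      have := norm_nonneg φ; have := norm_nonneg φ'; linarith
    set ψ : C(W,ℝ) := φ' + ContinuousMap.const W ε + c • g with hψdef
    have hψval : ∀ z, ψ z = φ' z + ε + c * g z := fun z => rfl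
    have h1 : μ φ ≤ μ ψ := by
      rw [hrep φ, hrep ψ]
      refine mono hν (ContinuousMap.le_def.mpr ?_)
      rintro ⟨z, hz⟩
      simp only [ContinuousMap.restrict_apply]
      rw [hψval]
      by_cases hzU : z ∈ U
      · have hgz : 0 ≤ g z := (hg01 z).1
        have : φ z < φ' z + ε := hzU
        nlinarith
      · have hgz : g z = 1 := hg1 ⟨hz, hzU⟩
        rw [hgz]
        have b1 : |φ z| ≤ ‖φ‖ := φ.norm_coe_le_norm z
        have b2 : |φ' z| ≤ ‖φ'‖ := φ'.norm_coe_le_norm z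
        have := (_root_.abs_le.mp b1).2
        have := (_root_.abs_le.mp b2).1
        rw [hcdef]; ring_nf; linarith
    have h2 : μ ψ ≤ μ (φ' + ContinuousMap.const W ε) := by
      refine ih hA' ψ (φ' + ContinuousMap.const W ε) fun z hz => ?_
      have hgz : g z = 0 := hg0 hz
      have : ψ z = φ' z + ε + c * g z := hψval z
      rw [hgz] at this
      simp only [ContinuousMap.add_apply, ContinuousMap.const_apply]
      linarith
    have h3 : μ (φ' + ContinuousMap.const W ε) = μ φ' + ε := h.2.1 φ' ε
    linarith

lemma rep_of_open [CompactSpace W] [NormalSpace W] (h : IsIPM W μ) {U B : Set W}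
    (hU : IsOpen U) (hsupp : IPMsupp μ ⊆ U) (hUB : U ⊆ B) (hB : IsClosed B) :
    Rep μ B := by
  classical
  have hcpt : IsCompact Uᶜ := hU.isClosed_compl.isCompact
  have hempty : Uᶜ ∩ ⋂ (i : {A : Set W // Rep μ A}), i.1 = ∅ := by
    rw [Set.eq_empty_iff_forall_notMem]
    rintro z ⟨hz1, hz2⟩
    refine hz1 (hsupp ?_)
    rw [supp_eq]
    rw [Set.mem_sInter]
    intro A hA
    rw [Set.mem_iInter] at hz2
    exact hz2 ⟨A, hA⟩
  obtain ⟨t, ht⟩ := hcpt.elim_finite_subfamily_closed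
    (fun i : {A : Set W // Rep μ A} => i.1) (fun i => i.2.1) hempty
  have hsub : (⋂ i ∈ t, (i : {A : Set W // Rep μ A}).1) ⊆ B := by
    intro z hz
    refine hUB ?_
    by_contra hzU
    have : z ∈ Uᶜ ∩ ⋂ i ∈ t, (i : {A : Set W // Rep μ A}).1 := ⟨hzU, hz⟩
    rw [ht] at this
    exact this
  have key : ∀ φ φ' : C(W,ℝ), (∀ z ∈ B, φ z ≤ φ' z) → μ φ ≤ μ φ' :=
    fun φ φ' hle => mono_inter h _ t (fun i _ => i.2) φ φ' fun z hz => hle z (hsub hz)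
  have keyeq : ∀ φ φ' : C(W,ℝ), (∀ z ∈ B, φ z = φ' z) → μ φ = μ φ' :=
    fun φ φ' hle => le_antisymm (key φ φ' fun z hz => (hle z hz).le)
      (key φ' φ fun z hz => (hle z hz).ge)
  have hext : ∀ ψ : C(↥B, ℝ), ∃ g : C(W,ℝ), g.restrict B = ψ :=
    fun ψ => ψ.exists_restrict_eq hB
  choose E hE using hext
  have hEval : ∀ (ψ : C(↥B, ℝ)) (z : W) (hz : z ∈ B), E ψ z = ψ ⟨z, hz⟩ := by
    intro ψ z hz
    have := DFunLike.congr_fun (hE ψ) ⟨z, hz⟩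
    rwa [ContinuousMap.restrict_apply] at this
  refine ⟨hB, fun ψ => μ (E ψ), ⟨?_, ?_, ?_⟩, ?_⟩
  · intro c
    have : μ (E (ContinuousMap.const (↥B) c)) = μ (ContinuousMap.const W c) :=
      keyeq _ _ fun z hz => by rw [hEval _ z hz]; rfl
    dsimp only
    rw [this, h.1]
  · intro ψ c
    have : μ (E (ψ + ContinuousMap.const (↥B) c)) = μ (E ψ + ContinuousMap.const W c) :=
      keyeq _ _ fun z hz => by
        rw [hEval _ z hz]
        simp only [ContinuousMap.add_apply, ContinuousMap.const_apply]
        rw [hEval _ z hz]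
    dsimp only
    rw [this, h.2.1]
  · intro ψ ψ'
    have : μ (E (ψ ⊔ ψ')) = μ (E ψ ⊔ E ψ') :=
      keyeq _ _ fun z hz => by
        rw [hEval _ z hz]
        simp only [ContinuousMap.sup_apply]
        rw [hEval _ z hz, hEval _ z hz]
    dsimp only
    rw [this, h.2.2]
  · intro φ
    exact keyeq φ (E (φ.restrict B)) fun z hz => by
      rw [hEval _ z hz, ContinuousMap.restrict_apply]

lemma mem_supp_of_bound [NormalSpace W] [T1Space W] (h : IsIPM W μ) {z : W} {r : ℝ}
    (hr : ∀ ψ : C(W,ℝ), ψ z + r ≤ μ ψ) : z ∈ IPMsupp μ := by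
  rw [supp_eq, Set.mem_sInter]
  intro A hA
  by_contra hz
  obtain ⟨hAc, ν, hν, hrep⟩ := hA
  have hd : Disjoint A {z} := by
    rw [Set.disjoint_left]; rintro w hw rfl; exact hz hw
  obtain ⟨g, hg0, hg1, hg01⟩ := exists_continuous_zero_one_of_isClosed hAc isClosed_singleton hd
  set n : ℝ := 1 - r with hndef
  have hval : μ (n • g) = 0 := by
    have h1 : μ (n • g) = ν ((n • g).restrict A) := hrep _
    have h2 : μ (ContinuousMap.const W (0:ℝ)) = ν ((ContinuousMap.const W (0:ℝ)).restrict A) :=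
      hrep _
    have h3 : (n • g).restrict A = (ContinuousMap.const W (0:ℝ)).restrict A := by
      ext ⟨a, ha⟩
      simp only [ContinuousMap.restrict_apply, ContinuousMap.smul_apply,
        ContinuousMap.const_apply, smul_eq_mul]
      rw [hg0 ha]; simp
    rw [h1, h3, ← h2, h.1]
  have := hr (n • g)
  rw [hval] at this
  have hgz : g z = 1 := by have := hg1 rfl; simpa using this
  simp only [ContinuousMap.smul_apply, smul_eq_mul, hgz, mul_one] at this
  rw [hndef] at this
  linarith


end P4

section P5


variable {W : Type*} [TopologicalSpace W] {μ : C(W, ℝ) → ℝ}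

lemma sup'_sub {ι : Type*} (s : Finset ι) (hs : s.Nonempty) (f : ι → ℝ) (c : ℝ) :
    s.sup' hs (fun i => f i - c) = s.sup' hs f - c := by
  apply le_antisymm
  · exact Finset.sup'_le _ _ fun i hi => sub_le_sub_right (Finset.le_sup' f hi) c
  · rw [sub_le_iff_le_add]
    exact Finset.sup'_le _ _ fun i hi => by
      have := Finset.le_sup' (fun i => f i - c) hi
      linarith

lemma ipm_sup' (h : IsIPM W μ) {ι : Type*} {s : Finset ι} (hs : s.Nonempty)
    (f : ι → C(W,ℝ)) : μ (s.sup' hs f) = s.sup' hs (fun i => μ (f i)) := by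
  induction hs using Finset.Nonempty.cons_induction with
  | singleton i => simp
  | cons i s hi hs ih =>
    rw [Finset.sup'_cons, Finset.sup'_cons, h.2.2, ih]
    exact hs

lemma select [CompactSpace W] (h : IsIPM W μ) (Φ : C(W,ℝ)) {ε : ℝ} (hε : 0 < ε) :
    ∃ z : W, ∀ ψ : C(W,ℝ), ψ z + (μ Φ - Φ z - ε) ≤ μ ψ := by
  by_contra hcon
  push_neg at hcon
  choose ψ0 hψ0 using hcon
  set ψ' : W → C(W,ℝ) := fun z => ψ0 z + ContinuousMap.const W (μ Φ - μ (ψ0 z)) with hψ'def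
  have hμψ' : ∀ z, μ (ψ' z) = μ Φ := fun z => by rw [hψ'def]; dsimp only; rw [h.2.1]; ring
  have hψ'z : ∀ z, Φ z + ε < ψ' z z := fun z => by
    have h1 := hψ0 z
    simp only [hψ'def, ContinuousMap.add_apply, ContinuousMap.const_apply]
    linarith
  set U : W → Set W := fun z => {w | Φ w + ε < ψ' z w} with hUdef
  have hU : ∀ z, IsOpen (U z) := fun z =>
    isOpen_lt (Φ.continuous.add continuous_const) (ψ' z).continuous
  have hcover : Set.univ ⊆ ⋃ z, U z := fun w _ => Set.mem_iUnion.mpr ⟨w, hψ'z w⟩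
  obtain ⟨t, ht⟩ := isCompact_univ.elim_finite_subcover U hU hcover
  have htne : t.Nonempty := by
    obtain ⟨w⟩ := nonempty h
    obtain ⟨z, hz, _⟩ := Set.mem_iUnion₂.mp (ht (Set.mem_univ w))
    exact ⟨z, hz⟩
  set Ψ : C(W,ℝ) := t.sup' htne ψ' with hΨdef
  have h1 : μ Ψ = μ Φ := by
    rw [hΨdef, ipm_sup' h]
    rw [show (fun i => μ (ψ' i)) = fun _ => μ Φ from funext hμψ']
    exact Finset.sup'_const _ _
  have h2 : ∀ w, Φ w + ε ≤ Ψ w := by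
    intro w
    obtain ⟨z, hz, hw⟩ := Set.mem_iUnion₂.mp (ht (Set.mem_univ w))
    have hle : ψ' z w ≤ Ψ w := by
      rw [hΨdef, ContinuousMap.sup'_apply]
      exact Finset.le_sup' (fun z => ψ' z w) hz
    exact le_trans (le_of_lt hw) hle
  have h3 : μ (Φ + ContinuousMap.const W ε) ≤ μ Ψ := by
    refine mono h (ContinuousMap.le_def.mpr fun w => ?_)
    simp only [ContinuousMap.add_apply, ContinuousMap.const_apply]
    exact h2 w
  rw [h.2.1, h1] at h3
  linarith

lemma finite_approx [CompactSpace W] [NormalSpace W] [T1Space W] (h : IsIPM W μ)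
    {ε : ℝ} (hε : 0 < ε) (G : Finset C(W,ℝ)) :
    ∃ (P : Finset (W × ℝ)) (hP : P.Nonempty),
      (∀ p ∈ P, p.1 ∈ IPMsupp μ) ∧
      (∀ p ∈ P, ∀ ψ : C(W,ℝ), ψ p.1 + p.2 ≤ μ ψ + ε) ∧
      (P.sup' hP Prod.snd = 0) ∧
      (∀ Φ ∈ G, μ Φ - ε ≤ P.sup' hP fun p => Φ p.1 + p.2) := by
  classical
  set G' : Finset C(W,ℝ) := insert 0 G with hG'def
  have hG'ne : G'.Nonempty := ⟨0, Finset.mem_insert_self 0 G⟩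
  have hsel : ∀ Φ : {Φ // Φ ∈ G'}, ∃ z : W,
      ∀ ψ : C(W,ℝ), ψ z + (μ Φ.1 - Φ.1 z - ε) ≤ μ ψ := fun Φ => select h Φ.1 hε
  choose zf hzf using hsel
  set lam : {Φ // Φ ∈ G'} → ℝ := fun Φ => μ Φ.1 - Φ.1 (zf Φ) - ε with hlamdef
  have hattne : G'.attach.Nonempty := Finset.attach_nonempty_iff.mpr hG'ne
  set m : ℝ := G'.attach.sup' hattne lam with hmdef
  have hlam_nonpos : ∀ Φ, lam Φ ≤ 0 := by
    intro Φ
    have := hzf Φ (ContinuousMap.const W 0)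
    rw [h.1 0] at this
    simpa [hlamdef] using this
  have hm_nonpos : m ≤ 0 := Finset.sup'_le _ _ fun Φ _ => hlam_nonpos Φ
  have hm_ge : -ε ≤ m := by
    have h0 : (0 : C(W,ℝ)) ∈ G' := Finset.mem_insert_self 0 G
    have hmem := Finset.mem_attach G' ⟨0, h0⟩
    have hl : lam ⟨0, h0⟩ = -ε := by
      simp [hlamdef, zero_eq h]
    calc -ε = lam ⟨0, h0⟩ := hl.symm
      _ ≤ m := Finset.le_sup' lam hmem
  set P : Finset (W × ℝ) := G'.attach.image (fun Φ => (zf Φ, lam Φ - m)) with hPdef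
  have hPne : P.Nonempty := hattne.image _
  have hmemP : ∀ p ∈ P, ∃ Φ, p = (zf Φ, lam Φ - m) := by
    intro p hp
    rw [hPdef, Finset.mem_image] at hp
    obtain ⟨Φ, _, hΦ⟩ := hp
    exact ⟨Φ, hΦ.symm⟩
  refine ⟨P, hPne, ?_, ?_, ?_, ?_⟩
  · rintro p hp
    obtain ⟨Φ, rfl⟩ := hmemP p hp
    exact mem_supp_of_bound h (hzf Φ)
  · rintro p hp ψ
    obtain ⟨Φ, rfl⟩ := hmemP p hp
    have h1 := hzf Φ ψ
    have hl : lam Φ = μ Φ.1 - Φ.1 (zf Φ) - ε := rfl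
    dsimp only
    have : -m ≤ ε := by linarith
    linarith
  · have hgoal : (G'.attach.image (fun Φ => (zf Φ, lam Φ - m))).sup'
        (hattne.image _) Prod.snd = 0 := by
      rw [Finset.sup'_image]
      show G'.attach.sup' hattne (fun Φ => lam Φ - m) = 0
      rw [sup'_sub]
      rw [← hmdef]
      ring
    exact hgoal
  · intro Φ hΦ
    have hΦ' : Φ ∈ G' := Finset.mem_insert_of_mem hΦ
    have hmem : (zf ⟨Φ, hΦ'⟩, lam ⟨Φ, hΦ'⟩ - m) ∈ P := by
      rw [hPdef, Finset.mem_image]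
      exact ⟨⟨Φ, hΦ'⟩, Finset.mem_attach _ _, rfl⟩
    have hle := Finset.le_sup' (fun p : W × ℝ => Φ p.1 + p.2) hmem
    have : Φ (zf ⟨Φ, hΦ'⟩) + (lam ⟨Φ, hΦ'⟩ - m) = μ Φ - ε - m := by
      rw [hlamdef]; dsimp only; ring
    rw [this] at hle
    linarith


end P5

section P6




lemma sup'_add_const {ι : Type*} (s : Finset ι) (hs : s.Nonempty) (f : ι → ℝ) (c : ℝ) :
    s.sup' hs (fun i => f i + c) = s.sup' hs f + c := by
  apply le_antisymm
  · exact Finset.sup'_le _ _ fun i hi => add_le_add (Finset.le_sup' f hi) le_rfl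
  · have h1 : s.sup' hs f ≤ s.sup' hs (fun i => f i + c) - c :=
      Finset.sup'_le _ _ fun i hi => by
        have := Finset.le_sup' (fun i => f i + c) hi; linarith
    linarith

lemma sup'_max {ι : Type*} (s : Finset ι) (hs : s.Nonempty) (f g : ι → ℝ) :
    s.sup' hs (fun i => max (f i) (g i)) = max (s.sup' hs f) (s.sup' hs g) := by
  apply le_antisymm
  · exact Finset.sup'_le _ _ fun i hi =>
      max_le_max (Finset.le_sup' f hi) (Finset.le_sup' g hi)
  · refine max_le (Finset.sup'_le _ _ fun i hi => ?_) (Finset.sup'_le _ _ fun i hi => ?_)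
    · exact le_trans (le_max_left _ _) (Finset.le_sup' (fun i => max (f i) (g i)) hi)
    · exact le_trans (le_max_right _ _) (Finset.le_sup' (fun i => max (f i) (g i)) hi)

variable {V : Type*} [TopologicalSpace V] {ι : Type*}

/-- Max-plus combination of a finite family of idempotent measures. -/
noncomputable def comb (P : Finset ι) (hP : P.Nonempty) (wt : ι → ℝ)
    (F : ι → (C(V,ℝ) → ℝ)) : C(V,ℝ) → ℝ :=
  fun φ => P.sup' hP (fun i => F i φ + wt i)

lemma comb_isIPM {P : Finset ι} (hP : P.Nonempty) {wt : ι → ℝ}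
    (hwt : P.sup' hP wt = 0) {F : ι → (C(V,ℝ) → ℝ)} (hF : ∀ i ∈ P, IsIPM V (F i)) :
    IsIPM V (comb P hP wt F) := by
  refine ⟨fun c => ?_, fun φ c => ?_, fun φ ψ => ?_⟩
  · show P.sup' hP (fun i => F i (ContinuousMap.const V c) + wt i) = c
    have : ∀ i ∈ P, F i (ContinuousMap.const V c) + wt i = c + wt i := fun i hi => by
      rw [(hF i hi).1]
    rw [Finset.sup'_congr hP rfl this]
    have : (fun i => c + wt i) = fun i => wt i + c := by funext i; ring
    rw [this, sup'_add_const, hwt]; ring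
  · show P.sup' hP (fun i => F i (φ + ContinuousMap.const V c) + wt i) =
      P.sup' hP (fun i => F i φ + wt i) + c
    have : ∀ i ∈ P, F i (φ + ContinuousMap.const V c) + wt i = (F i φ + wt i) + c :=
      fun i hi => by rw [(hF i hi).2.1]; ring
    rw [Finset.sup'_congr hP rfl this, sup'_add_const]
  · show P.sup' hP (fun i => F i (φ ⊔ ψ) + wt i) =
      max (P.sup' hP fun i => F i φ + wt i) (P.sup' hP fun i => F i ψ + wt i)
    have : ∀ i ∈ P, F i (φ ⊔ ψ) + wt i = max (F i φ + wt i) (F i ψ + wt i) :=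
      fun i hi => by rw [(hF i hi).2.2, max_add_add_right]
    rw [Finset.sup'_congr hP rfl this, sup'_max]

lemma comb_map {X Y : Type*} [TopologicalSpace X] [TopologicalSpace Y] (f : C(X,Y))
    (P : Finset ι) (hP : P.Nonempty) (wt : ι → ℝ) (F : ι → (C(X,ℝ) → ℝ)) :
    IPMmap f (comb P hP wt F) = comb P hP wt (fun i => IPMmap f (F i)) := rfl

lemma comb_rep {P : Finset ι} (hP : P.Nonempty) (wt : ι → ℝ)
    (hwt : P.sup' hP wt = 0) {F : ι → (C(V,ℝ) → ℝ)} {K : Set V} (hK : IsClosed K)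
    (hF : ∀ i ∈ P, Rep (F i) K) : Rep (comb P hP wt F) K := by
  classical
  have hch : ∀ i : ι, ∃ ν : C(K,ℝ) → ℝ, i ∈ P →
      IsIPM K ν ∧ ∀ φ : C(V,ℝ), F i φ = ν (φ.restrict K) := by
    intro i
    by_cases hi : i ∈ P
    · obtain ⟨_, ν, hν⟩ := hF i hi
      exact ⟨ν, fun _ => hν⟩
    · exact ⟨fun _ => 0, fun h => absurd h hi⟩
  choose ν hν using hch
  refine ⟨hK, comb P hP wt ν, comb_isIPM hP hwt fun i hi => (hν i hi).1, fun φ => ?_⟩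
  show P.sup' hP (fun i => F i φ + wt i) = P.sup' hP (fun i => ν i (φ.restrict K) + wt i)
  refine Finset.sup'_congr hP rfl fun i hi => ?_
  rw [(hν i hi).2 φ]


end P6

section P7




variable {V : Type*} [TopologicalSpace V]

/-- Idempotent measures on `V` supported in `K`. -/
def RepCpl (K : Set V) : Set (C(V,ℝ) → ℝ) :=
  (fun ν : C(K,ℝ) → ℝ => fun φ : C(V,ℝ) => ν (φ.restrict K)) '' {ν | IsIPM K ν}

lemma repCpl_isIPM {K : Set V} {ξ : C(V,ℝ) → ℝ} (h : ξ ∈ RepCpl K) : IsIPM V ξ := by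
  obtain ⟨ν, hν, rfl⟩ := h
  refine ⟨fun c => ?_, fun φ c => ?_, fun φ ψ => ?_⟩
  · have : (ContinuousMap.const V c).restrict K = ContinuousMap.const (↥K) c := by
      ext z; rfl
    dsimp only; rw [this, hν.1]
  · have : (φ + ContinuousMap.const V c).restrict K =
        φ.restrict K + ContinuousMap.const (↥K) c := by ext z; rfl
    dsimp only; rw [this, hν.2.1]
  · have : (φ ⊔ ψ).restrict K = φ.restrict K ⊔ ψ.restrict K := by
      ext z; simp
    dsimp only; rw [this, hν.2.2]

lemma repCpl_rep {K : Set V} (hK : IsClosed K) {ξ : C(V,ℝ) → ℝ} (h : ξ ∈ RepCpl K) :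
    Rep ξ K := by
  obtain ⟨ν, hν, rfl⟩ := h
  exact ⟨hK, ν, hν, fun φ => rfl⟩

lemma mem_repCpl {K : Set V} {ξ : C(V,ℝ) → ℝ} (h : Rep ξ K) : ξ ∈ RepCpl K := by
  obtain ⟨hK, ν, hν, hrep⟩ := h
  exact ⟨ν, hν, (funext fun φ => (hrep φ).symm)⟩

lemma isCompact_repCpl [CompactSpace V] {K : Set V} (hK : IsClosed K) :
    IsCompact (RepCpl K) := by
  haveI : CompactSpace (↥K) := isCompact_iff_compactSpace.mp hK.isCompact
  exact isCompact_isIPM.image (continuous_pi fun φ => continuous_apply _)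


end P7
-- ===== metric-space level lemmas =====
section metric
variable {X : Type*} [MetricSpace X] [CompactSpace X]

lemma dist_le_diam (p : X × X) : dist p.1 p.2 ≤ Metric.diam (Set.univ : Set X) :=
  Metric.dist_le_diam_of_mem isCompact_univ.isBounded trivial trivial

lemma suppVal_nonneg (ξ : C(X × X, ℝ) → ℝ) :
    0 ≤ sSup ((fun p : X × X => dist p.1 p.2) '' IPMsupp ξ) :=
  Real.sSup_nonneg fun x hx => by
    obtain ⟨p, _, rfl⟩ := hx; exact dist_nonneg

lemma suppVal_le {ξ : C(X × X, ℝ) → ℝ} {c : ℝ} (hc : 0 ≤ c)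
    (hsub : IPMsupp ξ ⊆ {p : X × X | dist p.1 p.2 ≤ c}) :
    sSup ((fun p : X × X => dist p.1 p.2) '' IPMsupp ξ) ≤ c :=
  Real.sSup_le (fun x hx => by obtain ⟨p, hp, rfl⟩ := hx; exact hsub hp) hc

lemma suppVal_le_diam (ξ : C(X × X, ℝ) → ℝ) :
    sSup ((fun p : X × X => dist p.1 p.2) '' IPMsupp ξ) ≤
      Metric.diam (Set.univ : Set X) :=
  Real.sSup_le (fun x hx => by obtain ⟨p, _, rfl⟩ := hx; exact dist_le_diam p)
    Metric.diam_nonneg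

lemma rho_le {μ ν : C(X,ℝ) → ℝ} {ξ : C(X × X,ℝ) → ℝ} (hξ : ξ ∈ AdmSet μ ν) :
    rhoID (fun x y : X => dist x y) μ ν ≤
      sSup ((fun p : X × X => dist p.1 p.2) '' IPMsupp ξ) :=
  csInf_le ⟨0, fun s hs => by obtain ⟨ζ, _, rfl⟩ := hs; exact suppVal_nonneg ζ⟩
    ⟨ξ, hξ, rfl⟩

lemma rho_nonneg {μ ν : C(X,ℝ) → ℝ} (hμ : IsIPM X μ) (hν : IsIPM X ν) :
    0 ≤ rhoID (fun x y : X => dist x y) μ ν := by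
  refine le_csInf ((admSet_nonempty hμ hν).image _) ?_
  rintro b ⟨ζ, _, rfl⟩
  exact suppVal_nonneg ζ

lemma rho_le_diam {μ ν : C(X,ℝ) → ℝ} (hμ : IsIPM X μ) (hν : IsIPM X ν) :
    rhoID (fun x y : X => dist x y) μ ν ≤ Metric.diam (Set.univ : Set X) := by
  obtain ⟨ξ, hξ⟩ := admSet_nonempty hμ hν
  exact le_trans (rho_le hξ) (suppVal_le_diam ξ)

lemma rho_lt {μ ν : C(X,ℝ) → ℝ} (hμ : IsIPM X μ) (hν : IsIPM X ν) {c : ℝ}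
    (hlt : rhoID (fun x y : X => dist x y) μ ν < c) :
    ∃ ξ ∈ AdmSet μ ν, sSup ((fun p : X × X => dist p.1 p.2) '' IPMsupp ξ) < c := by
  obtain ⟨b, hb, hbc⟩ := exists_lt_of_csInf_lt ((admSet_nonempty hμ hν).image _) hlt
  obtain ⟨ξ, hξ, rfl⟩ := hb
  exact ⟨ξ, hξ, hbc⟩

end metric


end IPMaux

open IPMaux

/-- The barycenter map `ψ : (I²(X), ρ₂) → (I(X), ρ₁)` is nonexpanding. -/
theorem bary_nonexpanding {X : Type*} [MetricSpace X] [CompactSpace X]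
    (M N : C(IPMspace X, ℝ) → ℝ) (hM : IsIPM (IPMspace X) M) (hN : IsIPM (IPMspace X) N) :
    rhoID (fun x y : X => dist x y) (bary M) (bary N) ≤
      rhoID (fun μ ν : IPMspace X => rhoID (fun x y : X => dist x y) μ.1 ν.1) M N := by
  classical
  haveI hIc : CompactSpace (IPMspace X) := isCompact_iff_compactSpace.mp isCompact_isIPM
  -- abbreviations
  set d : X → X → ℝ := fun x y => dist x y with hd
  set ρ2d : IPMspace X → IPMspace X → ℝ := fun μ ν => rhoID d μ.1 ν.1 with hρ2d
  -- RHS is an inf over a nonempty set; bound LHS by each member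
  rw [show rhoID ρ2d M N =
      sInf ((fun Ξ => sSup ((fun q : IPMspace X × IPMspace X => ρ2d q.1 q.2) ''
          IPMsupp Ξ)) '' AdmSet M N) from rfl]
  refine le_csInf ((admSet_nonempty hM hN).image _) ?_
  rintro b ⟨Ξ, hΞ, rfl⟩
  set R := sSup ((fun q : IPMspace X × IPMspace X => ρ2d q.1 q.2) '' IPMsupp Ξ) with hR
  refine le_of_forall_pos_le_add fun ε hε => ?_
  -- the target closed set
  set K : Set (X × X) := {p | dist p.1 p.2 ≤ R + ε} with hK
  have hKc : IsClosed K := isClosed_le (continuous_fst.dist continuous_snd) continuous_const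
  set U' : Set (X × X) := {p | dist p.1 p.2 < R + ε} with hU'
  have hU'o : IsOpen U' := isOpen_lt (continuous_fst.dist continuous_snd) continuous_const
  have hU'K : U' ⊆ K := fun p hp => le_of_lt (show dist p.1 p.2 < R + ε from hp)
  -- upper bound for the ρ2d image
  have hbddIm : BddAbove ((fun q : IPMspace X × IPMspace X => ρ2d q.1 q.2) '' IPMsupp Ξ) := by
    refine ⟨Metric.diam (Set.univ : Set X), ?_⟩
    rintro s ⟨q, _, rfl⟩
    exact rho_le_diam q.1.2 q.2.2
  -- MAIN CLAIM: there is a coupling of (bary M, bary N) supported in K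
  have main : ∃ ξ, IsIPM (X × X) ξ ∧ Rep ξ K ∧
      IPMmap ContinuousMap.fst ξ = bary M ∧ IPMmap ContinuousMap.snd ξ = bary N := by
    by_contra hcon
    -- the compact set of couplings supported in K, and its image under marginals
    set Gmap : (C(X × X,ℝ) → ℝ) → ((C(X,ℝ) → ℝ) × (C(X,ℝ) → ℝ)) :=
      fun ξ => (IPMmap ContinuousMap.fst ξ, IPMmap ContinuousMap.snd ξ) with hGmap
    have hGcont : Continuous Gmap := by
      refine Continuous.prodMk ?_ ?_ <;>
        exact continuous_pi fun φ => continuous_apply _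
    set Im : Set ((C(X,ℝ) → ℝ) × (C(X,ℝ) → ℝ)) := Gmap '' RepCpl K with hIm
    have hImCpt : IsCompact Im := (isCompact_repCpl hKc).image hGcont
    have hImClosed : IsClosed Im := hImCpt.isClosed
    have hnotmem : (bary M, bary N) ∉ Im := by
      rintro ⟨ξ, hξmem, hξeq⟩
      refine hcon ⟨ξ, repCpl_isIPM hξmem, repCpl_rep hKc hξmem, ?_, ?_⟩
      · exact congrArg Prod.fst hξeq
      · exact congrArg Prod.snd hξeq
    -- extract a basic open neighborhood
    obtain ⟨U, V, hUo, hVo, hMU, hNV, hUV⟩ :=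
      isOpen_prod_iff.mp hImClosed.isOpen_compl (bary M) (bary N) hnotmem
    obtain ⟨I, u, hu, hIu⟩ := isOpen_pi_iff.mp hUo (bary M) hMU
    obtain ⟨J, v, hv, hJv⟩ := isOpen_pi_iff.mp hVo (bary N) hNV
    -- a uniform radius
    have hrad : ∃ ε' > 0, (∀ φ ∈ I, Metric.ball (bary M φ) ε' ⊆ u φ) ∧
        (∀ φ ∈ J, Metric.ball (bary N φ) ε' ⊆ v φ) := by
      have hI : ∀ φ : {φ // φ ∈ I}, ∃ δ > 0, Metric.ball (bary M φ.1) δ ⊆ u φ.1 :=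
        fun φ => Metric.isOpen_iff.mp (hu φ.1 φ.2).1 _ (hu φ.1 φ.2).2
      have hJ : ∀ φ : {φ // φ ∈ J}, ∃ δ > 0, Metric.ball (bary N φ.1) δ ⊆ v φ.1 :=
        fun φ => Metric.isOpen_iff.mp (hv φ.1 φ.2).1 _ (hv φ.1 φ.2).2
      choose δI hδI hδI' using hI
      choose δJ hδJ hδJ' using hJ
      set F : Finset ℝ := insert 1 ((I.attach.image δI) ∪ (J.attach.image δJ)) with hF
      have hFne : F.Nonempty := ⟨1, Finset.mem_insert_self _ _⟩
      refine ⟨F.min' hFne, ?_, ?_, ?_⟩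
      · have : ∀ x ∈ F, 0 < x := by
          intro x hx
          rw [hF, Finset.mem_insert] at hx
          rcases hx with rfl | hx
          · norm_num
          · rcases Finset.mem_union.mp hx with hx | hx <;>
              · obtain ⟨φ, _, rfl⟩ := Finset.mem_image.mp hx
                first | exact hδI φ | exact hδJ φ
        exact this _ (F.min'_mem hFne)
      · intro φ hφ
        refine subset_trans (Metric.ball_subset_ball ?_) (hδI' ⟨φ, hφ⟩)
        refine Finset.min'_le _ _ ?_
        rw [hF]
        refine Finset.mem_insert_of_mem (Finset.mem_union_left _ ?_)
        exact Finset.mem_image.mpr ⟨⟨φ, hφ⟩, Finset.mem_attach _ _, rfl⟩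
      · intro φ hφ
        refine subset_trans (Metric.ball_subset_ball ?_) (hδJ' ⟨φ, hφ⟩)
        refine Finset.min'_le _ _ ?_
        rw [hF]
        refine Finset.mem_insert_of_mem (Finset.mem_union_right _ ?_)
        exact Finset.mem_image.mpr ⟨⟨φ, hφ⟩, Finset.mem_attach _ _, rfl⟩
    obtain ⟨ε', hε', hballI, hballJ⟩ := hrad
    -- test functions at the I²(X) level
    set G : Finset C(IPMspace X × IPMspace X, ℝ) :=
      (I.image fun φ => (barFn φ).comp ContinuousMap.fst) ∪
      (J.image fun φ => (barFn φ).comp ContinuousMap.snd) with hG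
    -- finite approximation of Ξ
    obtain ⟨P, hP, hsupp, hpoint, hwt, happrox⟩ :=
      finite_approx hΞ.1 (by positivity : (0:ℝ) < ε'/2) G
    -- choose near-optimal couplings for the support points
    have hch : ∀ p : (IPMspace X × IPMspace X) × ℝ, ∃ ζ : C(X × X, ℝ) → ℝ, p ∈ P →
        IsIPM (X × X) ζ ∧ Rep ζ K ∧
        IPMmap ContinuousMap.fst ζ = p.1.1.1 ∧ IPMmap ContinuousMap.snd ζ = p.1.2.1 := by
      intro p
      by_cases hp : p ∈ P
      · have hq : p.1 ∈ IPMsupp Ξ := hsupp p hp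
        have hrle : ρ2d p.1.1 p.1.2 ≤ R :=
          le_csSup hbddIm ⟨p.1, hq, rfl⟩
        have hlt : rhoID d p.1.1.1 p.1.2.1 < R + ε := by
          have : ρ2d p.1.1 p.1.2 = rhoID d p.1.1.1 p.1.2.1 := rfl
          linarith [this ▸ hrle]
        obtain ⟨ζ, hζAdm, hζval⟩ := rho_lt p.1.1.2 p.1.2.2 hlt
        have hζsupp : IPMsupp ζ ⊆ U' := by
          intro q hqmem
          have hb : BddAbove ((fun p : X × X => d p.1 p.2) '' IPMsupp ζ) :=
            ⟨Metric.diam (Set.univ : Set X), by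
              rintro s ⟨w, _, rfl⟩; exact dist_le_diam w⟩
          have : d q.1 q.2 ≤ sSup ((fun p : X × X => d p.1 p.2) '' IPMsupp ζ) :=
            le_csSup hb ⟨q, hqmem, rfl⟩
          show dist q.1 q.2 < R + ε
          calc dist q.1 q.2 ≤ _ := this
            _ < R + ε := hζval
        have hζrep : Rep ζ K := rep_of_open hζAdm.1 hU'o hζsupp hU'K hKc
        exact ⟨ζ, fun _ => ⟨hζAdm.1, hζrep, hζAdm.2.1, hζAdm.2.2⟩⟩
      · exact ⟨fun _ => 0, fun h => absurd h hp⟩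
    choose F hF using hch
    -- the combined coupling
    set ξ' : C(X × X, ℝ) → ℝ := comb P hP Prod.snd F with hξ'
    have hξ'IPM : IsIPM (X × X) ξ' := comb_isIPM hP hwt fun p hp => (hF p hp).1
    have hξ'rep : Rep ξ' K := comb_rep hP _ hwt hKc fun p hp => (hF p hp).2.1
    -- its marginals are close to (bary M, bary N)
    have hmargF : ∀ φ : C(X,ℝ), IPMmap ContinuousMap.fst ξ' φ =
        P.sup' hP fun p => ((barFn φ).comp ContinuousMap.fst) p.1 + p.2 := by
      intro φ
      show P.sup' hP (fun p => F p (φ.comp ContinuousMap.fst) + p.2) = _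
      refine Finset.sup'_congr hP rfl fun p hp => ?_
      have := congrFun (hF p hp).2.2.1 φ
      rw [show F p (φ.comp ContinuousMap.fst) = IPMmap ContinuousMap.fst (F p) φ from rfl,
        this]
      rfl
    have hmargS : ∀ φ : C(X,ℝ), IPMmap ContinuousMap.snd ξ' φ =
        P.sup' hP fun p => ((barFn φ).comp ContinuousMap.snd) p.1 + p.2 := by
      intro φ
      show P.sup' hP (fun p => F p (φ.comp ContinuousMap.snd) + p.2) = _
      refine Finset.sup'_congr hP rfl fun p hp => ?_
      have := congrFun (hF p hp).2.2.2 φ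
      rw [show F p (φ.comp ContinuousMap.snd) = IPMmap ContinuousMap.snd (F p) φ from rfl,
        this]
      rfl
    have hclose : ∀ (Φ : C(IPMspace X × IPMspace X, ℝ)), Φ ∈ G →
        |P.sup' hP (fun p => Φ p.1 + p.2) - Ξ Φ| ≤ ε'/2 := by
      intro Φ hΦ
      have hup : P.sup' hP (fun p => Φ p.1 + p.2) ≤ Ξ Φ + ε'/2 :=
        Finset.sup'_le _ _ fun p hp => hpoint p hp Φ
      have hlo := happrox Φ hΦ
      rw [abs_le]
      constructor <;> linarith
    -- conclude membership in U ×ˢ V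
    have hmemU : IPMmap ContinuousMap.fst ξ' ∈ U := by
      refine hIu ?_
      rw [Set.mem_pi]
      intro φ hφ
      have hΦG : (barFn φ).comp ContinuousMap.fst ∈ G := by
        rw [hG]
        exact Finset.mem_union_left _ (Finset.mem_image.mpr ⟨φ, hφ, rfl⟩)
      have hc := hclose _ hΦG
      have hΞval : Ξ ((barFn φ).comp ContinuousMap.fst) = bary M φ := by
        have := congrFun hΞ.2.1 (barFn φ)
        exact this
      refine hballI φ hφ ?_
      rw [Metric.mem_ball, Real.dist_eq, hmargF φ]
      rw [hΞval] at hc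
      have : ε'/2 < ε' := by linarith
      calc |P.sup' hP (fun p => ((barFn φ).comp ContinuousMap.fst) p.1 + p.2) - bary M φ|
          ≤ ε'/2 := hc
        _ < ε' := this
    have hmemV : IPMmap ContinuousMap.snd ξ' ∈ V := by
      refine hJv ?_
      rw [Set.mem_pi]
      intro φ hφ
      have hΦG : (barFn φ).comp ContinuousMap.snd ∈ G := by
        rw [hG]
        exact Finset.mem_union_right _ (Finset.mem_image.mpr ⟨φ, hφ, rfl⟩)
      have hc := hclose _ hΦG
      have hΞval : Ξ ((barFn φ).comp ContinuousMap.snd) = bary N φ := by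
        have := congrFun hΞ.2.2 (barFn φ)
        exact this
      refine hballJ φ hφ ?_
      rw [Metric.mem_ball, Real.dist_eq, hmargS φ]
      rw [hΞval] at hc
      have : ε'/2 < ε' := by linarith
      calc |P.sup' hP (fun p => ((barFn φ).comp ContinuousMap.snd) p.1 + p.2) - bary N φ|
          ≤ ε'/2 := hc
        _ < ε' := this
    have : Gmap ξ' ∈ Im := ⟨ξ', mem_repCpl hξ'rep, rfl⟩
    have hcontra := hUV (Set.mk_mem_prod hmemU hmemV)
    exact hcontra this
  -- use the coupling to bound the distance
  obtain ⟨ξ, hξIPM, hξrep, hξf, hξs⟩ := main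
  have hR0 : 0 ≤ R := by
    obtain ⟨P, hP, hsupp, _, _, _⟩ :=
      finite_approx hΞ.1 (by norm_num : (0:ℝ) < 1) (∅ : Finset C(IPMspace X × IPMspace X, ℝ))
    obtain ⟨p, hp⟩ := hP
    have hmem : ρ2d p.1.1 p.1.2 ∈
        ((fun q : IPMspace X × IPMspace X => ρ2d q.1 q.2) '' IPMsupp Ξ) :=
      ⟨p.1, hsupp p hp, rfl⟩
    exact le_trans (rho_nonneg p.1.1.2 p.1.2.2) (le_csSup hbddIm hmem)
  have hle : sSup ((fun p : X × X => d p.1 p.2) '' IPMsupp ξ) ≤ R + ε := by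
    refine suppVal_le (by linarith) ?_
    exact supp_subset_of_rep hξrep
  exact le_trans (rho_le ⟨hξIPM, hξf, hξs⟩) hle
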